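/- Let d ≥ 1 and let φ : (0,1) → [0,d] satisfy, for all 0 < λ < θ < 1, 0 ≤ (1-λ)φ(λ) - (1-θ)φ(θ) ≤ (θ-λ)φ(λ/θ). Then for every θ ∈ (0,1) and every positive integer n, φ(θ) ≤ φ(θ^{1/n}). -/

import Mathlib

/-- φ(θ) ≤ φ(θ^{1/n}) for all θ ∈ (0,1) and n ≥ 1. -/
theorem stmt_1 (d : ℕ) (hd : 1 ≤ d) (φ : ℝ → ℝ)
    (hrange : ∀ θ : ℝ, 0 < θ → θ < 1 → 0 ≤ φ θ ∧ φ θ ≤ d)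
    (hconstr : ∀ l θ : ℝ, 0 < l → l < θ → θ < 1 →
      0 ≤ (1 - l) * φ l - (1 - θ) * φ θ ∧
      (1 - l) * φ l - (1 - θ) * φ θ ≤ (θ - l) * φ (l / θ))
    (θ : ℝ) (hθ0 : 0 < θ) (hθ1 : θ < 1) (n : ℕ) (hn : 0 < n) :
    φ θ ≤ φ (θ ^ ((1 : ℝ) / n)) := by
  set σ : ℝ := θ ^ ((1 : ℝ) / n) with hσ
  have hσ0 : 0 < σ := Real.rpow_pos_of_pos hθ0 _
  have hn' : (n : ℝ) ≠ 0 := Nat.cast_ne_zero.mpr hn.ne'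
  have hσ1 : σ < 1 := Real.rpow_lt_one hθ0.le hθ1 (by positivity)
  have hσn : σ ^ n = θ := by
    rw [hσ, ← Real.rpow_natCast (θ ^ ((1:ℝ)/n)) n, ← Real.rpow_mul hθ0.le]
    rw [one_div_mul_cancel hn', Real.rpow_one]
  -- key claim by induction
  have key : ∀ m : ℕ, (1 - σ ^ (m + 1)) * φ (σ ^ (m + 1)) ≤ (1 - σ ^ (m + 1)) * φ σ := by
    intro m
    induction m with
    | zero => simp
    | succ m ih =>
      have hpm : 0 < σ ^ (m + 1) := pow_pos hσ0 _
      have hlt : σ ^ (m + 2) < σ ^ (m + 1) :=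
        pow_lt_pow_right_of_lt_one₀ hσ0 hσ1 (by omega)
      have hlt1 : σ ^ (m + 1) < 1 := pow_lt_one₀ hσ0.le hσ1 (by omega)
      have h := (hconstr (σ ^ (m + 2)) (σ ^ (m + 1)) (pow_pos hσ0 _) hlt hlt1).2
      have hdiv : σ ^ (m + 2) / σ ^ (m + 1) = σ := by
        rw [pow_succ σ (m + 1), mul_div_assoc]
        field_simp
      rw [hdiv] at h
      have hring : (1 - σ ^ (m + 1)) * φ σ + (σ ^ (m + 1) - σ ^ (m + 2)) * φ σ
          = (1 - σ ^ (m + 2)) * φ σ := by ring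
      linarith
  obtain ⟨m, rfl⟩ := Nat.exists_eq_succ_of_ne_zero hn.ne'
  have h := key m
  rw [hσn] at h
  have h1θ : 0 < 1 - θ := by linarith
  exact le_of_mul_le_mul_left h h1θ
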